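/- Let f be a nonzero homogeneous polynomial of degree d ≥ 2 in n complex variables. Then there exist x ∈ ℂ^n with ‖x‖₂ = 1 and λ ∈ ℝ such that (1/d)∇f(x) = λ·conj(x) and λ = ‖f‖_{σ,ℂ}. Furthermore, ‖f‖_{σ,ℂ} equals the maximum of |λ| over all pairs (x, λ) with x ∈ ℂ^n, ‖x‖₂ = 1, λ ∈ ℝ, and (1/d)∇f(x) = λ·conj(x). -/

import Mathlib

open MvPolynomial

/-- The Euclidean (Hermitian) norm on `ℂⁿ`. -/
noncomputable def euclNorm {n : ℕ} (x : Fin n → ℂ) : ℝ :=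
  Real.sqrt (∑ i, ‖x i‖ ^ 2)

/-- The complex spectral norm of `f`: the supremum of `|f(x)|` over the unit sphere of `ℂⁿ`. -/
noncomputable def specNorm {n : ℕ} (f : MvPolynomial (Fin n) ℂ) : ℝ :=
  sSup {r : ℝ | ∃ x : Fin n → ℂ, euclNorm x = 1 ∧ r = ‖eval x f‖}

/- ### Auxiliary lemmas -/

lemma degree_eq_of_mem_support' {n d : ℕ} {f : MvPolynomial (Fin n) ℂ}
    (hhom : f.IsHomogeneous d) {m : Fin n →₀ ℕ} (hm : coeff m f ≠ 0) :
    ∑ i, m i = d := by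
  have h1 : m.degree = d := by
    by_contra h
    exact hm (hhom.coeff_eq_zero h)
  rw [← h1, Finsupp.degree]
  exact (Finset.sum_subset (Finset.subset_univ _) (fun i _ hi => by
    simpa using Finsupp.notMem_support_iff.mp hi)).symm

lemma eval_smul_pow' {n d : ℕ} {f : MvPolynomial (Fin n) ℂ}
    (hhom : f.IsHomogeneous d) (c : ℂ) (x : Fin n → ℂ) :
    eval (c • x) f = c ^ d * eval x f := by
  rw [f.as_sum, map_sum, map_sum, Finset.mul_sum]
  refine Finset.sum_congr rfl fun m hm => ?_
  rw [eval_monomial, eval_monomial]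
  have hdeg := degree_eq_of_mem_support' hhom (mem_support_iff.mp hm)
  have : (m.prod fun i e => (c • x) i ^ e) = c ^ d * m.prod fun i e => x i ^ e := by
    rw [Finsupp.prod, Finsupp.prod]
    simp only [Pi.smul_apply, smul_eq_mul, mul_pow]
    rw [Finset.prod_mul_distrib, Finset.prod_pow_eq_pow_sum]
    congr 2
    rw [← hdeg]
    exact Finset.sum_subset (Finset.subset_univ _) (fun i _ hi => by
      simpa using Finsupp.notMem_support_iff.mp hi)
  rw [this]; ring

lemma euler_eval' {n d : ℕ} {f : MvPolynomial (Fin n) ℂ}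
    (hhom : f.IsHomogeneous d) (x : Fin n → ℂ) :
    ∑ i, x i * eval x (pderiv i f) = d * eval x f := by
  have key : ∑ i, X i * pderiv i f = (d : MvPolynomial (Fin n) ℂ) * f := by
    rw [f.as_sum]
    simp only [map_sum, Finset.mul_sum]
    rw [Finset.sum_comm]
    refine Finset.sum_congr rfl fun m hm => ?_
    have hdeg := degree_eq_of_mem_support' hhom (mem_support_iff.mp hm)
    have step : ∀ i : Fin n, X i * pderiv i (monomial m (coeff m f))
        = (m i : MvPolynomial (Fin n) ℂ) * monomial m (coeff m f) := by
      intro i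
      rw [pderiv_monomial]
      rcases Nat.eq_zero_or_pos (m i) with h | h
      · simp [h]
      · have hle : (Finsupp.single i 1) ≤ m := Finsupp.single_le_iff.mpr h
        rw [X, monomial_mul, one_mul, add_tsub_cancel_of_le hle]
        rw [← map_natCast (C : ℂ →+* MvPolynomial (Fin n) ℂ) (m i), C_mul_monomial]
        ring_nf
    rw [Finset.sum_congr rfl (fun i _ => step i), ← Finset.sum_mul, ← Nat.cast_sum, hdeg]
  have := congrArg (eval x) key
  simpa [Finset.mul_sum] using this

noncomputable def evalD {n : ℕ} (f : MvPolynomial (Fin n) ℂ) (x : Fin n → ℂ) :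
    (Fin n → ℂ) →L[ℂ] ℂ :=
  ∑ i, eval x (pderiv i f) • (ContinuousLinearMap.proj i)

lemma evalD_apply {n : ℕ} (f : MvPolynomial (Fin n) ℂ) (x v : Fin n → ℂ) :
    evalD f x v = ∑ i, eval x (pderiv i f) * v i := by
  simp [evalD]

lemma hasStrictFDerivAt_eval' {n : ℕ} (f : MvPolynomial (Fin n) ℂ) (x : Fin n → ℂ) :
    HasStrictFDerivAt (fun y => eval y f) (evalD f x) x := by
  induction f using MvPolynomial.induction_on with
  | C a =>
      have : evalD (C a : MvPolynomial (Fin n) ℂ) x = 0 := by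
        ext v; simp [evalD]
      rw [this]
      simp only [eval_C]
      exact hasStrictFDerivAt_const a x
  | add p q hp hq =>
      have : evalD (p + q) x = evalD p x + evalD q x := by
        ext v; simp [evalD_apply, Finset.sum_add_distrib, add_mul]
      rw [this]
      simp only [map_add]
      exact hp.add hq
  | mul_X p i hp =>
      have h2 : HasStrictFDerivAt (fun y : Fin n → ℂ => y i)
          (ContinuousLinearMap.proj (R := ℂ) (φ := fun _ : Fin n => ℂ) i) x :=
        (ContinuousLinearMap.proj (R := ℂ) (φ := fun _ : Fin n => ℂ) i).hasStrictFDerivAt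
      have := hp.mul h2
      have heq : evalD (p * X i) x
          = eval x p • (ContinuousLinearMap.proj i) + x i • evalD p x := by
        ext v
        simp only [ContinuousLinearMap.add_apply, ContinuousLinearMap.smul_apply,
          ContinuousLinearMap.proj_apply, evalD_apply, smul_eq_mul]
        have : ∀ j, eval x (pderiv j (p * X i)) =
            eval x (pderiv j p) * x i + eval x p * (if i = j then 1 else 0) := by
          intro j
          rw [pderiv_mul]
          simp [pderiv_X, Pi.single_apply, eq_comm, apply_ite (eval x)]
        rw [Finset.sum_congr rfl fun j _ => by rw [this j]]
        simp only [add_mul, Finset.sum_add_distrib]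
        rw [Finset.mul_sum]
        have h1 : ∑ j, eval x p * (if i = j then 1 else 0) * v j = eval x p * v i := by
          simp [mul_ite, ite_mul]
        rw [h1, add_comm]
        congr 1
        exact Finset.sum_congr rfl fun j _ => by ring
      rw [heq]
      have hfun : (fun y => eval y (p * X i)) = fun y : Fin n → ℂ => eval y p * y i := by
        funext y; simp
      rw [hfun]
      exact this

noncomputable def rC {n : ℕ} (i : Fin n) : (Fin n → ℂ) →L[ℝ] ℝ :=
  Complex.reCLM.comp (ContinuousLinearMap.proj (R := ℝ) (φ := fun _ : Fin n => ℂ) i)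

noncomputable def mC {n : ℕ} (i : Fin n) : (Fin n → ℂ) →L[ℝ] ℝ :=
  Complex.imCLM.comp (ContinuousLinearMap.proj (R := ℝ) (φ := fun _ : Fin n => ℂ) i)

noncomputable def gD {n : ℕ} (x : Fin n → ℂ) : (Fin n → ℂ) →L[ℝ] ℝ :=
  ∑ i, (((x i).re • rC i + (x i).re • rC i) + ((x i).im • mC i + (x i).im • mC i))

lemma gD_apply {n : ℕ} (x v : Fin n → ℂ) :
    gD x v = ∑ i, 2 * ((x i).re * (v i).re + (x i).im * (v i).im) := by
  simp only [gD, ContinuousLinearMap.sum_apply, ContinuousLinearMap.add_apply,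
    ContinuousLinearMap.smul_apply, rC, mC, ContinuousLinearMap.comp_apply,
    ContinuousLinearMap.proj_apply, Complex.reCLM_apply, Complex.imCLM_apply, smul_eq_mul]
  exact Finset.sum_congr rfl fun i _ => by ring

lemma hasStrictFDerivAt_gfun {n : ℕ} (x : Fin n → ℂ) :
    HasStrictFDerivAt (fun y : Fin n → ℂ => ∑ i, Complex.normSq (y i)) (gD x) x := by
  have hfun : (fun y : Fin n → ℂ => ∑ i, Complex.normSq (y i))
      = fun y : Fin n → ℂ => ∑ i, ((y i).re * (y i).re + (y i).im * (y i).im) := by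
    funext y
    exact Finset.sum_congr rfl fun i _ => by simp [Complex.normSq_apply]
  rw [hfun, gD]
  refine HasStrictFDerivAt.fun_sum fun i _ => ?_
  have hr : HasStrictFDerivAt (fun y : Fin n → ℂ => (y i).re) (rC i) x :=
    (rC i).hasStrictFDerivAt
  have hm : HasStrictFDerivAt (fun y : Fin n → ℂ => (y i).im) (mC i) x :=
    (mC i).hasStrictFDerivAt
  exact (hr.mul hr).add (hm.mul hm)

noncomputable def phiD {n : ℕ} (f : MvPolynomial (Fin n) ℂ) (x : Fin n → ℂ) :
    (Fin n → ℂ) →L[ℝ] ℝ :=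
  Complex.reCLM.comp ((evalD f x).restrictScalars ℝ)

lemma phiD_apply {n : ℕ} (f : MvPolynomial (Fin n) ℂ) (x v : Fin n → ℂ) :
    phiD f x v = (∑ i, eval x (pderiv i f) * v i).re := by
  simp [phiD, evalD_apply]

lemma hasStrictFDerivAt_phi {n : ℕ} (f : MvPolynomial (Fin n) ℂ) (x : Fin n → ℂ) :
    HasStrictFDerivAt (fun y => (eval y f).re) (phiD f x) x :=
  (Complex.reCLM.hasStrictFDerivAt).comp x ((hasStrictFDerivAt_eval' f x).restrictScalars ℝ)

lemma euclNorm_eq_one_iff {n : ℕ} (x : Fin n → ℂ) :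
    euclNorm x = 1 ↔ ∑ i, Complex.normSq (x i) = 1 := by
  unfold euclNorm
  rw [Real.sqrt_eq_one]
  have : ∑ i, ‖x i‖ ^ 2 = ∑ i, Complex.normSq (x i) :=
    Finset.sum_congr rfl fun i _ => Complex.sq_norm (x i)
  rw [this]

lemma euclNorm_smul' {n : ℕ} (c : ℂ) (x : Fin n → ℂ) :
    euclNorm (c • x) = ‖c‖ * euclNorm x := by
  unfold euclNorm
  have : ∑ i, ‖(c • x) i‖ ^ 2
      = ‖c‖ ^ 2 * ∑ i, ‖x i‖ ^ 2 := by
    rw [Finset.mul_sum]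
    exact Finset.sum_congr rfl fun i _ => by
      simp [Pi.smul_apply, smul_eq_mul, map_mul, mul_pow]
  rw [this, Real.sqrt_mul (sq_nonneg _), Real.sqrt_sq (norm_nonneg c)]

lemma exists_max' {n : ℕ} (hn : Nonempty (Fin n)) (f : MvPolynomial (Fin n) ℂ) :
    ∃ z : Fin n → ℂ, euclNorm z = 1 ∧
      ∀ x : Fin n → ℂ, euclNorm x = 1 → ‖eval x f‖ ≤ ‖eval z f‖ := by
  set S : Set (Fin n → ℂ) := {x | euclNorm x = 1} with hS
  have hcontN : Continuous (euclNorm (n := n)) := by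
    unfold euclNorm
    exact Real.continuous_sqrt.comp
      (continuous_finset_sum _ fun i _ => (continuous_norm.comp (continuous_apply i)).pow 2)
  have hclosed : IsClosed S := isClosed_eq hcontN continuous_const
  have hbdd : Bornology.IsBounded S := by
    apply (Metric.isBounded_closedBall (x := (0 : Fin n → ℂ)) (r := 1)).subset
    intro x hx
    rw [Metric.mem_closedBall, dist_zero_right]
    rw [pi_norm_le_iff_of_nonneg zero_le_one]
    intro i
    have h1 : ∑ j, ‖x j‖ ^ 2 = 1 := Real.sqrt_eq_one.mp hx
    have h2 : ‖x i‖ ^ 2 ≤ 1 := by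
      rw [← h1]
      exact Finset.single_le_sum (f := fun j => ‖x j‖ ^ 2) (fun j _ => sq_nonneg _) (Finset.mem_univ i)
    have := (pow_le_one_iff_of_nonneg (norm_nonneg (x i)) (by norm_num : (2:ℕ) ≠ 0)).mp h2
    simpa using this
  have hcomp : IsCompact S := Metric.isCompact_of_isClosed_isBounded hclosed hbdd
  have hne : S.Nonempty := by
    obtain ⟨i₀⟩ := hn
    refine ⟨(Pi.single i₀ 1 : Fin n → ℂ), ?_⟩
    show euclNorm _ = 1
    unfold euclNorm
    have : ∑ i, ‖(Pi.single i₀ 1 : Fin n → ℂ) i‖ ^ 2 = 1 := by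
      rw [Finset.sum_eq_single i₀]
      · simp
      · intro j _ hj; simp [Pi.single_apply, hj]
      · intro h; exact absurd (Finset.mem_univ i₀) h
    rw [this, Real.sqrt_one]
  obtain ⟨z, hzS, hzmax⟩ := hcomp.exists_isMaxOn hne
    ((continuous_norm.comp (MvPolynomial.continuous_eval (p := f))).continuousOn)
  exact ⟨z, hzS, fun x hx => hzmax hx⟩

/-- For a nonzero homogeneous `f` of degree `d ≥ 2` there is a unit vector `x` with
`(1/d)∇f(x) = ‖f‖_{σ,ℂ} ⬝ conj x`, and `‖f‖_{σ,ℂ}` is the maximum of `|λ|` over all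
anti-eigenpairs `(x, λ)`. -/
theorem stmt2 {n d : ℕ} (hd : 2 ≤ d) (f : MvPolynomial (Fin n) ℂ) (hf : f ≠ 0)
    (hhom : f.IsHomogeneous d) :
    (∃ x : Fin n → ℂ, euclNorm x = 1 ∧
      ∀ i, (1 / (d : ℂ)) * eval x (pderiv i f) =
        ((specNorm f : ℝ) : ℂ) * (starRingEnd ℂ) (x i)) ∧
    IsGreatest {r : ℝ | ∃ (x : Fin n → ℂ) (lam : ℝ), euclNorm x = 1 ∧
        (∀ i, (1 / (d : ℂ)) * eval x (pderiv i f) = (lam : ℂ) * (starRingEnd ℂ) (x i)) ∧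
        r = |lam|}
      (specNorm f) := by
  have hd0 : d ≠ 0 := by omega
  have hdC : (d : ℂ) ≠ 0 := Nat.cast_ne_zero.mpr hd0
  -- `Fin n` is nonempty
  have hne : Nonempty (Fin n) := by
    by_contra h
    rw [not_nonempty_iff] at h
    obtain ⟨m, hm⟩ := MvPolynomial.ne_zero_iff.mp hf
    have := degree_eq_of_mem_support' hhom hm
    rw [Finset.univ_eq_empty, Finset.sum_empty] at this
    omega
  -- maximizer
  obtain ⟨z, hz1, hzmax⟩ := exists_max' hne f
  set M : ℝ := ‖eval z f‖ with hM
  have hMnonneg : 0 ≤ M := norm_nonneg _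
  -- specNorm f = M
  have hspec : specNorm f = M := by
    unfold specNorm
    exact IsGreatest.csSup_eq ⟨⟨z, hz1, rfl⟩, by rintro r ⟨x, hx, rfl⟩; exact hzmax x hx⟩
  -- M > 0
  have hM0 : 0 < M := by
    have hx : ∃ x : Fin n → ℂ, eval x f ≠ 0 := by
      by_contra h; push_neg at h
      exact hf (hhom.eq_zero_of_forall_eval_eq_zero h)
    obtain ⟨x, hxne⟩ := hx
    have hxn : euclNorm x ≠ 0 := by
      intro h0
      have hsum : ∑ i, ‖x i‖ ^ 2 = 0 := by
        have h2 := Real.sqrt_eq_zero'.mp h0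
        have hnn : 0 ≤ ∑ i, ‖x i‖ ^ 2 :=
          Finset.sum_nonneg fun i _ => sq_nonneg _
        linarith
      have hx0 : x = 0 := by
        funext i
        have : ‖x i‖ ^ 2 = 0 := by
          have := (Finset.sum_eq_zero_iff_of_nonneg
            (fun j _ => sq_nonneg (‖x j‖))).mp hsum i (Finset.mem_univ i)
          exact this
        have := pow_eq_zero_iff (n := 2) two_ne_zero |>.mp this
        exact norm_eq_zero.mp this
      apply hxne
      rw [hx0]
      have : ((0 : ℂ) • (0 : Fin n → ℂ)) = (0 : Fin n → ℂ) := by simp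
      calc eval (0 : Fin n → ℂ) f = eval ((0:ℂ) • (0 : Fin n → ℂ)) f := by rw [this]
        _ = 0 ^ d * eval (0 : Fin n → ℂ) f := eval_smul_pow' hhom 0 0
        _ = 0 := by rw [zero_pow hd0, zero_mul]
    have ht : 0 < euclNorm x := lt_of_le_of_ne (Real.sqrt_nonneg _) (Ne.symm hxn)
    set z₀ : Fin n → ℂ := ((euclNorm x : ℝ) : ℂ)⁻¹ • x with hz₀
    have hz₀1 : euclNorm z₀ = 1 := by
      rw [hz₀, euclNorm_smul', norm_inv, Complex.norm_real, Real.norm_eq_abs, abs_of_pos ht,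
        inv_mul_cancel₀ (ne_of_gt ht)]
    have : ‖eval z₀ f‖ ≠ 0 := by
      rw [hz₀, eval_smul_pow' hhom, norm_mul, norm_pow, norm_inv, Complex.norm_real, Real.norm_eq_abs,
        abs_of_pos ht]
      exact mul_ne_zero (pow_ne_zero _ (inv_ne_zero (ne_of_gt ht)))
        (norm_ne_zero_iff.mpr hxne)
    calc (0:ℝ) < ‖eval z₀ f‖ :=
          lt_of_le_of_ne (norm_nonneg _) (Ne.symm this)
      _ ≤ M := hzmax z₀ hz₀1
  -- rotate the phase
  set c : ℂ := eval z f / (M : ℂ) with hc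
  have hMC : (M : ℂ) ≠ 0 := by
    simp only [ne_eq, Complex.ofReal_eq_zero]; exact ne_of_gt hM0
  have habs_c : ‖c‖ = 1 := by
    rw [hc, norm_div, Complex.norm_real, Real.norm_eq_abs, abs_of_pos hM0, ← hM, div_self (ne_of_gt hM0)]
  set w : ℂ := (starRingEnd ℂ) c with hw
  have habs_w : ‖w‖ = 1 := by rw [hw, Complex.norm_conj, habs_c]
  set θ : ℝ := Complex.arg w with hθ
  set ω : ℂ := Complex.exp (((θ / d : ℝ) : ℂ) * Complex.I) with hω
  have hωd : ω ^ d = w := by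
    rw [hω, ← Complex.exp_nat_mul]
    have harg : ((d : ℂ)) * (((θ / d : ℝ) : ℂ) * Complex.I) = (θ : ℂ) * Complex.I := by
      push_cast
      field_simp
    rw [harg]
    have := Complex.norm_mul_exp_arg_mul_I w
    rw [habs_w] at this
    simpa using this
  have habs_ω : ‖ω‖ = 1 := by
    rw [hω, Complex.norm_exp]
    have : (((θ / d : ℝ) : ℂ) * Complex.I).re = 0 := by simp
    rw [this, Real.exp_zero]
  set y : Fin n → ℂ := ω • z with hy
  have hy1 : euclNorm y = 1 := by rw [hy, euclNorm_smul', habs_ω, one_mul, hz1]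
  have hevaly : eval y f = (M : ℂ) := by
    rw [hy, eval_smul_pow' hhom, hωd]
    have hez : eval z f = c * (M : ℂ) := by rw [hc, div_mul_cancel₀ _ hMC]
    rw [hez, hw, ← mul_assoc]
    have : (starRingEnd ℂ) c * c = ((Complex.normSq c : ℝ) : ℂ) := by
      rw [mul_comm]; exact Complex.mul_conj c
    rw [this]
    have : Complex.normSq c = 1 := by
      rw [Complex.normSq_eq_norm_sq, habs_c, one_pow]
    rw [this]
    simp
  -- Lagrange multipliers at y
  have hgy : ∑ i, Complex.normSq (y i) = 1 := (euclNorm_eq_one_iff y).mp hy1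
  have hextr : IsLocalExtrOn (fun x => (eval x f).re)
      {x : Fin n → ℂ | (fun x : Fin n → ℂ => ∑ i, Complex.normSq (x i)) x
        = (fun x : Fin n → ℂ => ∑ i, Complex.normSq (x i)) y} y := by
    refine Or.inr ?_
    apply Filter.eventually_iff_exists_mem.mpr
    refine ⟨_, self_mem_nhdsWithin, fun x hx => ?_⟩
    have hx1 : euclNorm x = 1 := by
      rw [euclNorm_eq_one_iff]
      have : ∑ i, Complex.normSq (x i) = ∑ i, Complex.normSq (y i) := hx
      rw [this, hgy]
    calc (eval x f).re ≤ ‖eval x f‖ := Complex.re_le_norm _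
      _ ≤ M := hzmax x hx1
      _ = (eval y f).re := by rw [hevaly]; simp
  obtain ⟨a, b, hab, hlin⟩ := hextr.exists_multipliers_of_hasStrictFDerivAt_1d
    (hasStrictFDerivAt_gfun y) (hasStrictFDerivAt_phi f y)
  have happ : ∀ v, a * gD y v + b * phiD f y v = 0 := by
    intro v
    have := congrArg (fun L : (Fin n → ℂ) →L[ℝ] ℝ => L v) hlin
    simpa using this
  -- evaluate at v = y
  have hgDy : gD y y = 2 := by
    rw [gD_apply]
    have : ∀ i, 2 * ((y i).re * (y i).re + (y i).im * (y i).im)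
        = 2 * Complex.normSq (y i) := by
      intro i; rw [Complex.normSq_apply]
    rw [Finset.sum_congr rfl fun i _ => this i, ← Finset.mul_sum, hgy, mul_one]
  have hphiy : phiD f y y = d * M := by
    rw [phiD_apply]
    have : ∑ i, eval y (pderiv i f) * y i = (d : ℂ) * eval y f := by
      rw [← euler_eval' hhom y]
      exact Finset.sum_congr rfl fun i _ => by ring
    rw [this, hevaly]
    simp
  have heqy : 2 * a + b * (d * M) = 0 := by
    have := happ y
    rw [hgDy, hphiy] at this
    linarith
  have hb : b ≠ 0 := by
    intro hb0
    have ha0 : a = 0 := by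
      rw [hb0] at heqy; linarith
    exact hab (by rw [ha0, hb0]; rfl)
  -- evaluate at coordinate vectors
  have hsingle : ∀ (j : Fin n) (u : ℂ),
      gD y (Pi.single j u) = 2 * ((y j).re * u.re + (y j).im * u.im) ∧
      phiD f y (Pi.single j u) = (eval y (pderiv j f) * u).re := by
    intro j u
    constructor
    · rw [gD_apply]
      rw [Finset.sum_eq_single j]
      · simp
      · intro i _ hij; simp [Pi.single_apply, hij]
      · intro h; exact absurd (Finset.mem_univ j) h
    · rw [phiD_apply]
      rw [Finset.sum_eq_single j]
      · simp
      · intro i _ hij; simp [Pi.single_apply, hij]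
      · intro h; exact absurd (Finset.mem_univ j) h
  have hkey : ∀ j, eval y (pderiv j f)
      = ((d * M : ℝ) : ℂ) * (starRingEnd ℂ) (y j) := by
    intro j
    set F := eval y (pderiv j f) with hF
    have h1 := happ (Pi.single j (1 : ℂ))
    rw [(hsingle j 1).1, (hsingle j 1).2] at h1
    simp only [Complex.one_re, Complex.one_im, mul_one, mul_zero, add_zero] at h1
    have h2 := happ (Pi.single j Complex.I)
    rw [(hsingle j Complex.I).1, (hsingle j Complex.I).2] at h2
    simp only [Complex.I_re, Complex.I_im, mul_zero, mul_one, zero_add,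
      Complex.mul_I_re] at h2
    -- h1 : a * (2 * ((y j).re * 1)) + b * F.re = 0 (roughly)
    have hre : F.re = d * M * (y j).re := by
      have hcomb : b * (F.re - d * M * (y j).re) = 0 := by
        linear_combination h1 - (y j).re * heqy
      rcases mul_eq_zero.mp hcomb with h | h
      · exact absurd h hb
      · linarith
    have him : F.im = -(d * M * (y j).im) := by
      have hcomb : b * (-F.im - d * M * (y j).im) = 0 := by
        linear_combination h2 - (y j).im * heqy
      rcases mul_eq_zero.mp hcomb with h | h
      · exact absurd h hb
      · linarith
    apply Complex.ext
    · simp [hre, Complex.mul_re]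
    · simp [him, Complex.mul_im]
  have hpair : ∀ j, (1 / (d : ℂ)) * eval y (pderiv j f)
      = ((M : ℝ) : ℂ) * (starRingEnd ℂ) (y j) := by
    intro j
    rw [hkey j]
    push_cast
    field_simp
  -- upper bound: any anti-eigenpair has |lam| ≤ M
  have hub : ∀ (x : Fin n → ℂ) (lam : ℝ), euclNorm x = 1 →
      (∀ i, (1 / (d : ℂ)) * eval x (pderiv i f) = (lam : ℂ) * (starRingEnd ℂ) (x i)) →
      |lam| ≤ M := by
    intro x lam hx1 hx2
    have hFx : ∀ i, eval x (pderiv i f) = (d : ℂ) * ((lam : ℂ) * (starRingEnd ℂ) (x i)) := by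
      intro i
      have h' : (d:ℂ) * ((1 / (d:ℂ)) * eval x (pderiv i f))
          = (d:ℂ) * ((lam : ℂ) * (starRingEnd ℂ) (x i)) := by rw [hx2 i]
      calc eval x (pderiv i f)
          = (d:ℂ) * ((1 / (d:ℂ)) * eval x (pderiv i f)) := by field_simp
        _ = (d:ℂ) * ((lam : ℂ) * (starRingEnd ℂ) (x i)) := h'
    have heval : eval x f = (lam : ℂ) := by
      have e1 := euler_eval' hhom x
      have e2 : ∑ i, x i * eval x (pderiv i f)
          = (d : ℂ) * (lam : ℂ) * ∑ i, ((Complex.normSq (x i) : ℝ) : ℂ) := by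
        rw [Finset.mul_sum]
        refine Finset.sum_congr rfl fun i _ => ?_
        rw [hFx i]
        have := Complex.mul_conj (x i)
        calc x i * ((d:ℂ) * ((lam:ℂ) * (starRingEnd ℂ) (x i)))
            = (d:ℂ) * (lam:ℂ) * (x i * (starRingEnd ℂ) (x i)) := by ring
          _ = (d:ℂ) * (lam:ℂ) * ((Complex.normSq (x i) : ℝ) : ℂ) := by rw [this]
      have hsum1 : ∑ i, ((Complex.normSq (x i) : ℝ) : ℂ) = 1 := by
        rw [← Complex.ofReal_sum]
        rw [(euclNorm_eq_one_iff x).mp hx1]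
        simp
      rw [e2, hsum1, mul_one] at e1
      exact mul_left_cancel₀ hdC e1.symm
    have : |lam| = ‖eval x f‖ := by
      rw [heval, Complex.norm_real, Real.norm_eq_abs]
    rw [this]
    exact hzmax x hx1
  refine ⟨⟨y, hy1, fun i => by rw [hspec]; exact hpair i⟩, ?_, ?_⟩
  · exact ⟨y, M, hy1, hpair, by rw [hspec, abs_of_pos hM0]⟩
  · rintro r ⟨x, lam, hx1, hx2, rfl⟩
    rw [hspec]
    exact hub x lam hx1 hx2
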